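/- In the free group F₂ with generating set S_γ, there do not exist s ∈ S_γ and g ∈ F₂ with g ≠ 1 such that |sg| = |g| or |gs| = |g|. -/

import Mathlib

section Defs

variable {G : Type*} [Group G]

/-- Word length with respect to a generating set `S`: the least `n` such that `g`
is a product of `n` elements of `S`. -/
noncomputable def wlen (S : Set G) (g : G) : ℕ :=
  sInf {n | ∃ l : List G, (∀ x ∈ l, x ∈ S) ∧ l.length = n ∧ l.prod = g}

/-- Word metric: `d(g,h) = |h⁻¹ g|`. -/
noncomputable def wdist (S : Set G) (x y : G) : ℝ := wlen S (y⁻¹ * x)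

/-- Gromov product `(x,y)_w = ½ (d(x,w) + d(w,y) − d(x,y))`. -/
noncomputable def gp (S : Set G) (x y w : G) : ℝ :=
  (wdist S x w + wdist S w y - wdist S x y) / 2

/-- The word metric is `δ`-hyperbolic (Gromov's four-point condition). -/
def IsDeltaHyperbolic (S : Set G) (δ : ℝ) : Prop :=
  ∀ x y z w : G, gp S x y w ≥ min (gp S x z w) (gp S y z w) - δ

/-- A group is virtually cyclic if it has a cyclic subgroup of finite index. -/
def VirtuallyCyclic (G : Type*) [Group G] : Prop :=
  ∃ H : Subgroup G, IsCyclic H ∧ H.FiniteIndex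

/-- `GenCon(g)`: the average word length of the conjugates of `g`
by the generators in `S`. -/
noncomputable def genCon (S : Set G) (g : G) : ℝ :=
  (∑ᶠ s ∈ S, (wlen S (s⁻¹ * g * s) : ℝ)) / S.ncard

/-- Conjugation curvature `κ(g) = (|g| − GenCon(g)) / |g|`. -/
noncomputable def kappa (S : Set G) (g : G) : ℝ :=
  ((wlen S g : ℝ) - genCon S g) / (wlen S g)

/-- `k`-spherical conjugation curvature
`κ_k(g) = (|g| − (1/#S_k) Σ_{s ∈ S_k} d(gs,s)) / |g|`; note `d(gs,s) = |s⁻¹ g s|`. -/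
noncomputable def kappaK (S : Set G) (k : ℕ) (g : G) : ℝ :=
  ((wlen S g : ℝ) -
      (∑ᶠ s ∈ {x : G | wlen S x = k}, (wlen S (s⁻¹ * g * s) : ℝ)) /
        ({x : G | wlen S x = k} : Set G).ncard) / (wlen S g)

end Defs

/-- The free group of rank 2. -/
abbrev F2 := FreeGroup Bool

namespace F2Gen

/-- The generator `a`. -/
def a : F2 := FreeGroup.of true

/-- The generator `b`. -/
def b : F2 := FreeGroup.of false

end F2Gen

open F2Gen

/-- The word `w = ababa`. -/
def wγ : F2 := a * b * a * b * a

/-- The generating set `S_γ = {a, a⁻¹, b, b⁻¹, w, w⁻¹}` of `F₂`. -/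
def Sγ : Set F2 := {a, a⁻¹, b, b⁻¹, wγ, wγ⁻¹}

/-- With respect to `S_γ`, there are no `s ∈ S_γ` and `g ≠ 1` with `|sg| = |g|`
or `|gs| = |g|`. -/

noncomputable def chi : F2 →* Multiplicative (ZMod 2) :=
  FreeGroup.lift (fun _ => Multiplicative.ofAdd (1 : ZMod 2))

lemma chi_gen : ∀ s ∈ Sγ, chi s = Multiplicative.ofAdd (1 : ZMod 2) := by
  intro s hs
  rcases hs with h | h | h | h | h | h <;> subst h <;>
    simp [chi, a, b, wγ, F2Gen.a, F2Gen.b] <;> decide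

lemma chi_list (l : List F2) (hl : ∀ x ∈ l, x ∈ Sγ) :
    chi l.prod = Multiplicative.ofAdd ((l.length : ZMod 2)) := by
  induction l with
  | nil => simp
  | cons x xs ih =>
    simp only [List.prod_cons, map_mul, List.length_cons]
    rw [chi_gen x (hl x (by simp)), ih (fun y hy => hl y (by simp [hy]))]
    push_cast
    rw [← ofAdd_add]
    ring_nf

lemma exists_list (g : F2) : ∃ l : List F2, (∀ x ∈ l, x ∈ Sγ) ∧ l.prod = g := by
  induction g using FreeGroup.induction_on with
  | C1 => exact ⟨[], by simp⟩
  | of x =>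
    cases x
    · exact ⟨[b], by simp [Sγ], by simp; rfl⟩
    · exact ⟨[a], by simp [Sγ], by simp; rfl⟩
  | inv_of x ih =>
    cases x
    · exact ⟨[b⁻¹], by simp [Sγ], by simp; rfl⟩
    · exact ⟨[a⁻¹], by simp [Sγ], by simp; rfl⟩
  | mul x y ihx ihy =>
    obtain ⟨l1, h1, hp1⟩ := ihx
    obtain ⟨l2, h2, hp2⟩ := ihy
    refine ⟨l1 ++ l2, ?_, by simp [hp1, hp2]⟩
    intro z hz
    rcases List.mem_append.mp hz with h | h
    · exact h1 z h
    · exact h2 z h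

lemma chi_wlen (g : F2) : chi g = Multiplicative.ofAdd ((wlen Sγ g : ZMod 2)) := by
  have hne : {n | ∃ l : List F2, (∀ x ∈ l, x ∈ Sγ) ∧ l.length = n ∧ l.prod = g}.Nonempty := by
    obtain ⟨l, hl, hp⟩ := exists_list g
    exact ⟨l.length, l, hl, rfl, hp⟩
  have hmem := Nat.sInf_mem hne
  obtain ⟨l, hl, hlen, hp⟩ := hmem
  subst hp
  rw [chi_list l hl, hlen]
  rfl

theorem no_length_preserving :
    ¬ ∃ s ∈ Sγ, ∃ g : F2, g ≠ 1 ∧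
      (wlen Sγ (s * g) = wlen Sγ g ∨ wlen Sγ (g * s) = wlen Sγ g) := by
  rintro ⟨s, hs, g, -, h | h⟩
  · have h1 := chi_wlen (s * g)
    rw [map_mul, chi_gen s hs, chi_wlen g, h, ← ofAdd_add] at h1
    have : (1 : ZMod 2) + (wlen Sγ g : ZMod 2) = (wlen Sγ g : ZMod 2) :=
      Multiplicative.ofAdd.injective h1
    simp at this
  · have h1 := chi_wlen (g * s)
    rw [map_mul, chi_gen s hs, chi_wlen g, h, ← ofAdd_add] at h1
    have : (wlen Sγ g : ZMod 2) + 1 = (wlen Sγ g : ZMod 2) :=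
      Multiplicative.ofAdd.injective h1
    simp at this
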